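/- Let K be a field, E the exterior algebra on basis x_1,...,x_n,y_1,...,y_n, and f = ∑_{i=1}^n x_i∧y_i. If e is a homogeneous element of E of degree d < n satisfying e∧f = 0, then when e is written in the standard monomial basis, the coefficient of every monomial of the form x_{i_1}∧...∧x_{i_d} (i.e., every monomial involving only x-variables) is zero. -/

import Mathlib

open ExteriorAlgebra

/-- The basis vector `x_i` in the exterior algebra on `x_1,…,x_n,y_1,…,y_n`. -/
noncomputable def xv (K : Type) [Field K] (n : ℕ) (i : Fin n) :
    ExteriorAlgebra K (Fin (n + n) → K) :=
  ι K (Pi.single (Fin.castAdd n i) 1)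

/-- The basis vector `y_i` in the exterior algebra on `x_1,…,x_n,y_1,…,y_n`. -/
noncomputable def yv (K : Type) [Field K] (n : ℕ) (i : Fin n) :
    ExteriorAlgebra K (Fin (n + n) → K) :=
  ι K (Pi.single (Fin.natAdd n i) 1)

/-- The quadric `f = ∑ x_i ∧ y_i`. -/
noncomputable def ff (K : Type) [Field K] (n : ℕ) :
    ExteriorAlgebra K (Fin (n + n) → K) :=
  ∑ i : Fin n, xv K n i * yv K n i

/-- The standard wedge monomial indexed by a finite set of basis indices,
multiplied in increasing order. -/
noncomputable def wedgeMonomial (K : Type) [Field K] (n : ℕ)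
    (s : Finset (Fin (n + n))) : ExteriorAlgebra K (Fin (n + n) → K) :=
  ((s.sort (· ≤ ·)).map (fun i => ι K (Pi.single i (1 : K)))).prod
section Aux
variable (K : Type) [Field K] (N : ℕ)

local notation "E" => ExteriorAlgebra K (Fin N → K)

noncomputable def gen (i : Fin N) : E := ι K (Pi.single i (1 : K))

theorem gen_eq : gen K N = fun i => ι K (Pi.single i (1:K)) := rfl

noncomputable def mon (L : List (Fin N)) : E := (L.map (gen K N)).prod

noncomputable def Dc (t : Fin N) : E →ₗ[K] E :=
  CliffordAlgebra.contractLeft (LinearMap.proj t)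

theorem Dc_gen_mul (t k : Fin N) (x : E) :
    Dc K N t (gen K N k * x) =
      (if t = k then (1:K) else 0) • x - gen K N k * Dc K N t x := by
  have := CliffordAlgebra.contractLeft_ι_mul (Q := (0 : QuadraticForm K (Fin N → K)))
    (d := LinearMap.proj t) (Pi.single k (1:K)) x
  simpa [Dc, gen, Pi.single_apply] using this

theorem mon_cons (k : Fin N) (L : List (Fin N)) :
    mon K N (k :: L) = gen K N k * mon K N L := by simp [mon]

theorem Dc_mon_not_mem (t : Fin N) (S : List (Fin N)) (h : t ∉ S) :
    Dc K N t (mon K N S) = 0 := by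
  induction S with
  | nil =>
    simp only [mon, List.map_nil, List.prod_nil]
    exact CliffordAlgebra.contractLeft_one _ _
  | cons k S ih =>
    rw [mon_cons, Dc_gen_mul, ih (fun hm => h (List.mem_cons_of_mem _ hm)),
      if_neg (fun ht => h (by rw [ht]; exact List.mem_cons_self)), zero_smul, mul_zero, sub_zero]

theorem Dc_mon_cons_self (t : Fin N) (S : List (Fin N)) (h : t ∉ S) :
    Dc K N t (mon K N (t :: S)) = mon K N S := by
  rw [mon_cons, Dc_gen_mul, Dc_mon_not_mem K N t S h, if_pos rfl, one_smul, mul_zero, sub_zero]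

noncomputable def extL : List (Fin N) → (E →ₗ[K] E)
  | [] => LinearMap.id
  | a :: T => (extL T).comp (Dc K N a)

@[simp] theorem extL_nil : extL K N [] = LinearMap.id := rfl
@[simp] theorem extL_cons (a : Fin N) (T : List (Fin N)) (x : E) :
    extL K N (a :: T) x = extL K N T (Dc K N a x) := rfl

theorem extL_mon_self (S : List (Fin N)) (h : S.Nodup) :
    extL K N S (mon K N S) = 1 := by
  induction S with
  | nil => simp [mon]
  | cons a S ih =>
    rw [extL_cons, Dc_mon_cons_self K N a S (List.nodup_cons.1 h).1,
      ih (List.nodup_cons.1 h).2]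

/-- span of monomials avoiding `t` -/
noncomputable def avoid (t : Fin N) : Submodule K E :=
  Submodule.span K {x | ∃ S : List (Fin N), t ∉ S ∧ x = mon K N S}

theorem gen_mul_avoid (t k : Fin N) (hk : t ≠ k) (x : E) (hx : x ∈ avoid K N t) :
    gen K N k * x ∈ avoid K N t := by
  induction hx using Submodule.span_induction with
  | mem x hx =>
    obtain ⟨S, hS, rfl⟩ := hx
    exact Submodule.subset_span ⟨k :: S, by simp [hk, hS, mon_cons],
      (mon_cons K N k S).symm⟩
  | zero => simpa using Submodule.zero_mem _
  | add a b _ _ ha hb => rw [mul_add]; exact Submodule.add_mem _ ha hb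
  | smul r a _ ha => rw [mul_smul_comm]; exact Submodule.smul_mem _ r ha

theorem Dc_mon_avoid (t j : Fin N) (S : List (Fin N)) (hS : t ∉ S) :
    Dc K N j (mon K N S) ∈ avoid K N t := by
  induction S with
  | nil =>
    simp only [mon, List.map_nil, List.prod_nil]
    rw [show (1:E) = mon K N [] by simp [mon]] at *
    rw [Dc_mon_not_mem K N j [] (by simp)]
    exact Submodule.zero_mem _
  | cons k S ih =>
    rw [mon_cons, Dc_gen_mul]
    refine Submodule.sub_mem _ (Submodule.smul_mem _ _ ?_) ?_
    · exact Submodule.subset_span ⟨S, fun h => hS (List.mem_cons_of_mem _ h), rfl⟩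
    · exact gen_mul_avoid K N t k (fun h => hS (h ▸ List.mem_cons_self))
        _ (ih (fun h => hS (List.mem_cons_of_mem _ h)))

theorem Dc_avoid (t j : Fin N) (x : E) (hx : x ∈ avoid K N t) :
    Dc K N j x ∈ avoid K N t := by
  induction hx using Submodule.span_induction with
  | mem x hx => obtain ⟨S, hS, rfl⟩ := hx; exact Dc_mon_avoid K N t j S hS
  | zero => simpa using Submodule.zero_mem _
  | add a b _ _ ha hb => rw [map_add]; exact Submodule.add_mem _ ha hb
  | smul r a _ ha => rw [map_smul]; exact Submodule.smul_mem _ r ha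

theorem Dc_avoid_self (t : Fin N) (x : E) (hx : x ∈ avoid K N t) :
    Dc K N t x = 0 := by
  induction hx using Submodule.span_induction with
  | mem x hx => obtain ⟨S, hS, rfl⟩ := hx; exact Dc_mon_not_mem K N t S hS
  | zero => simp
  | add a b _ _ ha hb => rw [map_add, ha, hb, add_zero]
  | smul r a _ ha => rw [map_smul, ha, smul_zero]

theorem extL_kill (T : List (Fin N)) (t : Fin N) (ht : t ∈ T) (x : E)
    (hx : x ∈ avoid K N t) : extL K N T x = 0 := by
  induction T generalizing x with
  | nil => simp at ht
  | cons a T ih =>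
    rw [extL_cons]
    rcases List.mem_cons.1 ht with rfl | ht'
    · rw [Dc_avoid_self K N t x hx, map_zero]
    · exact ih ht' _ (Dc_avoid K N t a x hx)

end Aux

set_option maxHeartbeats 1000000 in
/-- If a homogeneous element `e` of degree `d < n`, written in the standard
monomial basis with coefficients `c`, satisfies `e ∧ f = 0`, then the
coefficient of every monomial involving only `x`-variables is zero. -/
theorem stmt2 (K : Type) [Field K] (n d : ℕ) (hd : d < n)
    (c : Finset (Fin (n + n)) → K)
    (e : ExteriorAlgebra K (Fin (n + n) → K))
    (he : e = ∑ s ∈ Finset.univ.powersetCard d, c s • wedgeMonomial K n s)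
    (hef : e * ff K n = 0) :
    ∀ s : Finset (Fin (n + n)), s.card = d → (∀ i ∈ s, (i : ℕ) < n) →
      c s = 0 := by
  intro s hcard hmem
  have hinj : Function.Injective (fun j : Fin n => Fin.castAdd n j) := by
    intro a b h
    exact Fin.ext (by simpa using congrArg Fin.val h)
  have hex : ∃ j : Fin n, Fin.castAdd n j ∉ s := by
    by_contra h
    push_neg at h
    have hsub : Finset.univ.image (fun j : Fin n => Fin.castAdd n j) ⊆ s := by
      intro t ht
      obtain ⟨j, _, rfl⟩ := Finset.mem_image.1 ht
      exact h j
    have := Finset.card_le_card hsub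
    rw [Finset.card_image_of_injective _ hinj, Finset.card_univ, Fintype.card_fin, hcard] at this
    omega
  obtain ⟨j, hXj⟩ := hex
  have hYjs : Fin.natAdd n j ∉ s := by
    intro h
    have := hmem _ h
    simp only [Fin.coe_natAdd] at this
    omega
  have hXYj : Fin.castAdd n j ≠ Fin.natAdd n j := by
    intro h
    have h2 := congrArg Fin.val h
    have h3 := j.isLt
    simp only [Fin.coe_castAdd, Fin.coe_natAdd] at h2
    omega
  set T : List (Fin (n + n)) := s.sort (· ≤ ·) ++ [Fin.castAdd n j, Fin.natAdd n j] with hT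
  have hTnd : T.Nodup := by
    refine List.Nodup.append (Finset.sort_nodup _ _)
      (List.nodup_cons.2 ⟨by simpa using hXYj, List.nodup_singleton _⟩) ?_
    intro a ha hb
    rw [Finset.mem_sort] at ha
    simp only [List.mem_cons, List.not_mem_nil, or_false, List.mem_singleton] at hb
    rcases hb with rfl | rfl
    · exact hXj ha
    · exact hYjs ha
  have hexp : e * ff K n = ∑ s' ∈ Finset.univ.powersetCard d, ∑ i : Fin n,
      c s' • mon K (n+n) (s'.sort (· ≤ ·) ++ [Fin.castAdd n i, Fin.natAdd n i]) := by
    rw [he, ff, Finset.sum_mul]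
    refine Finset.sum_congr rfl fun s' _ => ?_
    rw [smul_mul_assoc, Finset.mul_sum, Finset.smul_sum]
    refine Finset.sum_congr rfl fun i _ => ?_
    congr 1
    show wedgeMonomial K n s' * (xv K n i * yv K n i) = _
    simp [mon, wedgeMonomial, xv, yv, gen_eq, List.map_append, List.prod_append, mul_assoc]
  have hkill : ∀ s' : Finset (Fin (n+n)), s'.card = d → ∀ i : Fin n, ¬(s' = s ∧ i = j) →
      extL K (n+n) T (mon K (n+n) (s'.sort (· ≤ ·) ++ [Fin.castAdd n i, Fin.natAdd n i])) = 0 := by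
    intro s' hs' i hne
    by_cases hall : ∀ t ∈ T, t ∈ s'.sort (· ≤ ·) ++ [Fin.castAdd n i, Fin.natAdd n i]
    · exfalso
      have hmsub : insert (Fin.castAdd n j) (insert (Fin.natAdd n j) s) ⊆
          insert (Fin.castAdd n i) (insert (Fin.natAdd n i) s') := by
        intro t ht
        have h1 : t ∈ T := by
          rw [hT]
          simp only [List.mem_append, Finset.mem_sort, List.mem_cons, List.mem_singleton,
            List.not_mem_nil, or_false]
          rcases Finset.mem_insert.1 ht with rfl | ht2
          · right; left; rfl
          rcases Finset.mem_insert.1 ht2 with rfl | ht3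
          · right; right; rfl
          · left; exact ht3
        have h2 := hall t h1
        simp only [List.mem_append, Finset.mem_sort, List.mem_cons, List.mem_singleton,
          List.not_mem_nil, or_false] at h2
        rcases h2 with h2 | h2 | h2
        · exact Finset.mem_insert_of_mem (Finset.mem_insert_of_mem h2)
        · rw [h2]; exact Finset.mem_insert_self _ _
        · rw [h2]; exact Finset.mem_insert_of_mem (Finset.mem_insert_self _ _)
      have hmcard : (insert (Fin.castAdd n j) (insert (Fin.natAdd n j) s)).card = d + 2 := by
        rw [Finset.card_insert_of_notMem, Finset.card_insert_of_notMem hYjs, hcard]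
        intro h
        rcases Finset.mem_insert.1 h with h | h
        · exact hXYj h
        · exact hXj h
      have hFcard : (insert (Fin.castAdd n i) (insert (Fin.natAdd n i) s')).card ≤ d + 2 := by
        calc (insert (Fin.castAdd n i) (insert (Fin.natAdd n i) s')).card
            ≤ (insert (Fin.natAdd n i) s').card + 1 := Finset.card_insert_le _ _
          _ ≤ s'.card + 1 + 1 := by
              have := Finset.card_insert_le (Fin.natAdd n i) s'
              omega
          _ = d + 2 := by rw [hs']
      have heq : insert (Fin.castAdd n j) (insert (Fin.natAdd n j) s) =
          insert (Fin.castAdd n i) (insert (Fin.natAdd n i) s') :=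
        Finset.eq_of_subset_of_card_le hmsub (by omega)
      have hYi : Fin.natAdd n i ∈ insert (Fin.castAdd n j) (insert (Fin.natAdd n j) s) := by
        rw [heq]; exact Finset.mem_insert_of_mem (Finset.mem_insert_self _ _)
      have hij : i = j := by
        rcases Finset.mem_insert.1 hYi with h | h
        · exfalso
          have h2 := congrArg Fin.val h
          have h3 := i.isLt
          simp only [Fin.coe_castAdd, Fin.coe_natAdd] at h2
          omega
        rcases Finset.mem_insert.1 h with h | h
        · exact Fin.ext (by simpa using congrArg Fin.val h)
        · exfalso
          have h2 := hmem _ h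
          simp only [Fin.coe_natAdd] at h2
          omega
      subst hij
      have hs'ne : s' ≠ s := fun h => hne ⟨h, rfl⟩
      have hXs' : Fin.castAdd n i ∉ s' := by
        intro h
        have h2 : insert (Fin.castAdd n i) (insert (Fin.natAdd n i) s') =
            insert (Fin.natAdd n i) s' :=
          Finset.insert_eq_self.2 (Finset.mem_insert_of_mem h)
        rw [heq, h2] at hmcard
        have := Finset.card_insert_le (Fin.natAdd n i) s'
        omega
      have hYs' : Fin.natAdd n i ∉ s' := by
        intro h
        have h2 : insert (Fin.natAdd n i) s' = s' := Finset.insert_eq_self.2 h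
        rw [heq, h2] at hmcard
        have := Finset.card_insert_le (Fin.castAdd n i) s'
        omega
      have hss : s' ⊆ s := by
        intro t ht
        have hts : t ∈ insert (Fin.castAdd n i) (insert (Fin.natAdd n i) s) := by
          rw [heq]
          exact Finset.mem_insert_of_mem (Finset.mem_insert_of_mem ht)
        rcases Finset.mem_insert.1 hts with rfl | h
        · exact absurd ht hXs'
        rcases Finset.mem_insert.1 h with rfl | h
        · exact absurd ht hYs'
        · exact h
      exact hs'ne (Finset.eq_of_subset_of_card_le hss (by omega))
    · push_neg at hall
      obtain ⟨t, htT, htL⟩ := hall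
      exact extL_kill K (n+n) T t htT _ (Submodule.subset_span ⟨_, htL, rfl⟩)
  have h0 : (0 : ExteriorAlgebra K (Fin (n+n) → K)) = ∑ s' ∈ Finset.univ.powersetCard d,
      ∑ i : Fin n, c s' • extL K (n+n) T
        (mon K (n+n) (s'.sort (· ≤ ·) ++ [Fin.castAdd n i, Fin.natAdd n i])) := by
    calc (0 : ExteriorAlgebra K (Fin (n+n) → K))
        = extL K (n+n) T (e * ff K n) := by rw [hef, map_zero]
      _ = _ := by rw [hexp]; simp only [map_sum, map_smul]
  rw [Finset.sum_eq_single s] at h0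
  · rw [Finset.sum_eq_single j] at h0
    · rw [show (s.sort (· ≤ ·) ++ [Fin.castAdd n j, Fin.natAdd n j]) = T from rfl,
        extL_mon_self K (n+n) T hTnd] at h0
      have hfin : algebraMap K (ExteriorAlgebra K (Fin (n+n) → K)) (c s) =
          algebraMap K (ExteriorAlgebra K (Fin (n+n) → K)) 0 := by
        rw [map_zero, Algebra.algebraMap_eq_smul_one, ← h0]
      exact (ExteriorAlgebra.algebraMap_inj (M := Fin (n+n) → K) _ _).1 hfin
    · intro i _ hij
      rw [hkill s hcard i (fun h => hij h.2), smul_zero]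
    · intro h
      exact absurd (Finset.mem_univ j) h
  · intro s' hs' hne
    refine Finset.sum_eq_zero fun i _ => ?_
    rw [hkill s' (Finset.mem_powersetCard_univ.1 hs') i (fun h => hne h.1), smul_zero]
  · intro hs
    exact absurd (Finset.mem_powersetCard_univ.2 hcard) hs
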